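/- The family of behaviors of deterministic splitters is not closed under union: over the alphabet A = {a,b} (a ≠ b), each of the singleton sets {(a, b, ab)} and {(a, b, ba)} is the behavior of a deterministic splitter with finitely many states, but their union {(a,b,ab), (a,b,ba)} is not the behavior of any deterministic splitter. -/

import Mathlib

/-- Words over the alphabet `A`, i.e. elements of the free monoid `A*`. -/
abbrev Word (A : Type) := List A

/-- The generating set `G = {(a,ε,a) : a ∈ A} ∪ {(ε,a,a) : a ∈ A}` of the
Shuffling Monoid. -/
def genG (A : Type) : Set (Word A × Word A × Word A) :=
  {g | ∃ a : A, g = ([a], [], [a]) ∨ g = ([], [a], [a])}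

/-- Componentwise product (concatenation) of a list of triples of words. -/
def prodTriple {A : Type} (ls : List (Word A × Word A × Word A)) :
    Word A × Word A × Word A :=
  ((ls.map fun l => l.1).flatten, (ls.map fun l => l.2.1).flatten,
    (ls.map fun l => l.2.2).flatten)

/-- The Shuffling Monoid `U`: the submonoid of `A* × A* × A*` generated by `G`,
described as the set of all products of finite sequences of generators. -/
def shuffleU (A : Type) : Set (Word A × Word A × Word A) :=
  {m | ∃ ls : List (Word A × Word A × Word A), (∀ l ∈ ls, l ∈ genG A) ∧ prodTriple ls = m}

/-- A spliffer (equivalently, splitter) over `A`: a finite automaton whose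
transitions are labeled by elements of `G`. -/
structure Spliffer (A : Type) where
  Q : Type
  finQ : Finite Q
  E : Q → (Word A × Word A × Word A) → Q → Prop
  I : Set Q
  T : Set Q
  labels_mem : ∀ {q l q'}, E q l q' → l ∈ genG A

/-- Paths in a spliffer, recording the sequence of labels. -/
inductive Spliffer.Path {A : Type} (S : Spliffer A) :
    S.Q → List (Word A × Word A × Word A) → S.Q → Prop
  | nil (q : S.Q) : Spliffer.Path S q [] q
  | cons {q q' q'' : S.Q} {l : Word A × Word A × Word A}
      {ls : List (Word A × Word A × Word A)} :
      S.E q l q' → Spliffer.Path S q' ls q'' → Spliffer.Path S q (l :: ls) q''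

/-- The behavior `|S|` of a spliffer: products of the label sequences of all
successful runs. -/
def Spliffer.behavior {A : Type} (S : Spliffer A) : Set (Word A × Word A × Word A) :=
  {m | ∃ q ∈ S.I, ∃ q' ∈ S.T, ∃ ls, S.Path q ls q' ∧ prodTriple ls = m}

/-- A splitter is deterministic if it has a single initial state, for every state
and input letter there is at most one outgoing transition reading that letter,
and all transitions leaving a given state write to the same tape. -/
def Spliffer.Deterministic {A : Type} (S : Spliffer A) : Prop :=
  (∃! i, i ∈ S.I) ∧
  (∀ ⦃q l₁ q₁ l₂ q₂⦄, S.E q l₁ q₁ → S.E q l₂ q₂ → l₁.2.2 = l₂.2.2 → l₁ = l₂ ∧ q₁ = q₂) ∧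
  (∀ ⦃q l₁ q₁ l₂ q₂⦄, S.E q l₁ q₁ → S.E q l₂ q₂ →
    (l₁.1 = [] ∧ l₂.1 = []) ∨ (l₁.2.1 = [] ∧ l₂.2.1 = []))


lemma genG_split {A : Type} {l : Word A × Word A × Word A} (h : l ∈ genG A) :
    l.1 = [] ∨ l.2.1 = [] := by
  obtain ⟨x, h | h⟩ := h <;> subst h <;> simp

def lineSpliffer (A : Type) (l1 l2 : Word A × Word A × Word A)
    (h1 : l1 ∈ genG A) (h2 : l2 ∈ genG A) : Spliffer A where
  Q := Fin 3
  finQ := inferInstance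
  E q l q' := (q = 0 ∧ l = l1 ∧ q' = 1) ∨ (q = 1 ∧ l = l2 ∧ q' = 2)
  I := {0}
  T := {2}
  labels_mem := by
    rintro q l q' (⟨_, rfl, _⟩ | ⟨_, rfl, _⟩) <;> assumption

lemma lineSpliffer_det {A : Type} (l1 l2 : Word A × Word A × Word A)
    (h1 : l1 ∈ genG A) (h2 : l2 ∈ genG A) :
    (lineSpliffer A l1 l2 h1 h2).Deterministic := by
  refine ⟨⟨(0 : Fin 3), rfl, fun y hy => hy⟩, ?_, ?_⟩
  · rintro q la qa lb qb (⟨rfl, rfl, rfl⟩ | ⟨rfl, rfl, rfl⟩)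
      (⟨h, rfl, rfl⟩ | ⟨h, rfl, rfl⟩) _
    · exact ⟨rfl, rfl⟩
    · exact absurd h (by decide : ¬(0 : Fin 3) = 1)
    · exact absurd h (by decide : ¬(1 : Fin 3) = 0)
    · exact ⟨rfl, rfl⟩
  · rintro q la qa lb qb (⟨rfl, rfl, rfl⟩ | ⟨rfl, rfl, rfl⟩)
      (⟨h, rfl, rfl⟩ | ⟨h, rfl, rfl⟩)
    · rcases genG_split h1 with h' | h'
      · exact Or.inl ⟨h', h'⟩
      · exact Or.inr ⟨h', h'⟩
    · exact absurd h (by decide : ¬(0 : Fin 3) = 1)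
    · exact absurd h (by decide : ¬(1 : Fin 3) = 0)
    · rcases genG_split h2 with h' | h'
      · exact Or.inl ⟨h', h'⟩
      · exact Or.inr ⟨h', h'⟩

lemma lineSpliffer_path {A : Type} {l1 l2 : Word A × Word A × Word A}
    {h1 : l1 ∈ genG A} {h2 : l2 ∈ genG A} {q ls q'}
    (hp : (lineSpliffer A l1 l2 h1 h2).Path q ls q') :
    (q' = q ∧ ls = []) ∨
    (q = (0 : Fin 3) ∧ ((ls = [l1] ∧ q' = (1 : Fin 3)) ∨ (ls = [l1, l2] ∧ q' = (2 : Fin 3)))) ∨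
    (q = (1 : Fin 3) ∧ ls = [l2] ∧ q' = (2 : Fin 3)) := by
  induction hp with
  | nil q => exact Or.inl ⟨rfl, rfl⟩
  | cons he hp ih =>
    rcases he with ⟨rfl, rfl, rfl⟩ | ⟨rfl, rfl, rfl⟩
    · rcases ih with ⟨rfl, rfl⟩ | ⟨h, _⟩ | ⟨_, rfl, hq⟩
      · exact Or.inr (Or.inl ⟨rfl, Or.inl ⟨rfl, rfl⟩⟩)
      · exact absurd h (by decide : ¬(1 : Fin 3) = 0)
      · exact Or.inr (Or.inl ⟨rfl, Or.inr ⟨rfl, hq⟩⟩)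
    · rcases ih with ⟨rfl, rfl⟩ | ⟨h, _⟩ | ⟨h, _⟩
      · exact Or.inr (Or.inr ⟨rfl, rfl, rfl⟩)
      · exact absurd h (by decide : ¬(2 : Fin 3) = 0)
      · exact absurd h (by decide : ¬(2 : Fin 3) = 1)

lemma lineSpliffer_behavior {A : Type} (l1 l2 : Word A × Word A × Word A)
    (h1 : l1 ∈ genG A) (h2 : l2 ∈ genG A) :
    (lineSpliffer A l1 l2 h1 h2).behavior = {prodTriple [l1, l2]} := by
  ext m
  constructor
  · rintro ⟨q, hq, q', hq', ls, hp, rfl⟩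
    have hq0 : q = (0 : Fin 3) := hq
    have hq2 : q' = (2 : Fin 3) := hq'
    subst hq0; subst hq2
    rcases lineSpliffer_path hp with ⟨h, _⟩ | ⟨_, ⟨_, h⟩ | ⟨rfl, _⟩⟩ | ⟨h, _⟩
    · exact absurd h (by decide : ¬(2 : Fin 3) = 0)
    · exact absurd h (by decide : ¬(2 : Fin 3) = 1)
    · rfl
    · exact absurd h (by decide : ¬(0 : Fin 3) = 1)
  · rintro rfl
    exact ⟨(0 : Fin 3), rfl, (2 : Fin 3), rfl, [l1, l2],
      .cons (Or.inl ⟨rfl, rfl, rfl⟩) (.cons (Or.inr ⟨rfl, rfl, rfl⟩) (.nil _)), rfl⟩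

lemma flatten_third_len {A : Type} {ls : List (Word A × Word A × Word A)}
    (h : ∀ l ∈ ls, l ∈ genG A) :
    ((ls.map fun l => l.2.2).flatten).length = ls.length := by
  induction ls with
  | nil => simp
  | cons l ls ih =>
    obtain ⟨x, hx | hx⟩ := h l List.mem_cons_self <;> subst hx <;>
      simp [ih (fun l hl => h l (List.mem_cons_of_mem _ hl))]

lemma path_labels {A : Type} {S : Spliffer A} {q ls q'} (hp : S.Path q ls q') :
    ∀ l ∈ ls, l ∈ genG A := by
  induction hp with
  | nil q => simp
  | cons he _ ih =>
    intro l hl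
    rcases List.mem_cons.mp hl with rfl | hl
    · exact S.labels_mem he
    · exact ih l hl

lemma decomp_two {A : Type} {ls : List (Word A × Word A × Word A)}
    (hg : ∀ l ∈ ls, l ∈ genG A) {u v : A}
    (h : ((ls.map fun l => l.2.2).flatten) = [u, v]) :
    ∃ l1 l2, ls = [l1, l2] := by
  apply List.length_eq_two.mp
  rw [← flatten_third_len hg, h]
  rfl

lemma decomp1 {A : Type} (a b : A) (hab : a ≠ b) {ls : List (Word A × Word A × Word A)}
    (hg : ∀ l ∈ ls, l ∈ genG A)
    (h : prodTriple ls = ([a], [b], [a, b])) : ls = [([a], [], [a]), ([], [b], [b])] := by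
  obtain ⟨l1, l2, rfl⟩ := decomp_two hg (congrArg (fun t => t.2.2) h)
  obtain ⟨x, hx | hx⟩ := hg l1 (by simp) <;> obtain ⟨y, hy | hy⟩ := hg l2 (by simp) <;>
    subst hx <;> subst hy <;> simp_all [prodTriple]
  exact hab (h.2.2.1.symm.trans h.2.1)

lemma decomp2 {A : Type} (a b : A) (hab : a ≠ b) {ls : List (Word A × Word A × Word A)}
    (hg : ∀ l ∈ ls, l ∈ genG A)
    (h : prodTriple ls = ([a], [b], [b, a])) : ls = [([], [b], [b]), ([a], [], [a])] := by
  obtain ⟨l1, l2, rfl⟩ := decomp_two hg (congrArg (fun t => t.2.2) h)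
  obtain ⟨x, hx | hx⟩ := hg l1 (by simp) <;> obtain ⟨y, hy | hy⟩ := hg l2 (by simp) <;>
    subst hx <;> subst hy <;> simp_all [prodTriple]
  exact hab (h.1.symm.trans h.2.2.1)


/-- over `A = {a,b}`, each of `{(a,b,ab)}` and `{(a,b,ba)}` is the
behavior of a deterministic splitter, but their union is not; hence behaviors
of deterministic splitters are not closed under union. -/
theorem drat_not_closed_under_union {A : Type} (a b : A) (hab : a ≠ b)
    (hA : ∀ x : A, x = a ∨ x = b) :
    (∃ S : Spliffer A, S.Deterministic ∧ S.behavior =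
        ({([a], [b], [a, b])} : Set (Word A × Word A × Word A))) ∧
    (∃ S : Spliffer A, S.Deterministic ∧ S.behavior =
        ({([a], [b], [b, a])} : Set (Word A × Word A × Word A))) ∧
    ¬ ∃ S : Spliffer A, S.Deterministic ∧ S.behavior =
        ({([a], [b], [a, b]), ([a], [b], [b, a])} :
          Set (Word A × Word A × Word A)) := by
  refine ⟨⟨lineSpliffer A ([a], [], [a]) ([], [b], [b]) ⟨a, Or.inl rfl⟩ ⟨b, Or.inr rfl⟩,
      lineSpliffer_det _ _ _ _, ?_⟩,
    ⟨lineSpliffer A ([], [b], [b]) ([a], [], [a]) ⟨b, Or.inr rfl⟩ ⟨a, Or.inl rfl⟩,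
      lineSpliffer_det _ _ _ _, ?_⟩, ?_⟩
  · refine (lineSpliffer_behavior _ _ _ _).trans ?_; simp [prodTriple]
  · refine (lineSpliffer_behavior _ _ _ _).trans ?_; simp [prodTriple]
  · rintro ⟨S, ⟨⟨i, hi, hiu⟩, hdet2, hdet3⟩, hbeh⟩
    have h1 : ([a], [b], [a, b]) ∈ S.behavior := by rw [hbeh]; left; rfl
    have h2 : ([a], [b], [b, a]) ∈ S.behavior := by rw [hbeh]; right; rfl
    obtain ⟨q1, hq1, t1, ht1, ls1, hp1, hm1⟩ := h1
    obtain ⟨q2, hq2, t2, ht2, ls2, hp2, hm2⟩ := h2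
    have e1 := decomp1 a b hab (path_labels hp1) hm1
    have e2 := decomp2 a b hab (path_labels hp2) hm2
    subst e1; subst e2
    have hq : q2 = q1 := (hiu _ hq2).trans (hiu _ hq1).symm
    subst hq
    cases hp1 with
    | cons he1 _ =>
      cases hp2 with
      | cons he2 _ =>
        rcases hdet3 he1 he2 with ⟨h, _⟩ | ⟨_, h⟩ <;> simp at h
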